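/- Let G be a temporal graph with destination vertex z, let t ∈ [τ], and let P = (({v_{i-1},v_i},t_i))_{i=1}^m be a temporal s-z path in G with departure time t_1 ≥ t whose length m equals d(s,t), i.e., P is a shortest temporal s-z path among those departing at a time at least t. Then, with the convention t_{m+1} := t_m, d(v_i, t_{i+1}) = m − i for every i ∈ [0,m]; in particular, along a shortest temporal s-z path the temporal distance to z decreases by exactly one with every time-edge. -/

import Mathlib

attribute [local instance] Classical.propDecidable

noncomputable section

/-- A temporal graph: a lifetime `tau` and, for each time step, a set of
undirected edges (unordered pairs of distinct vertices) over `V`;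
edges exist only at time steps in `[1, tau]`. -/
structure TemporalGraph (V : Type*) where
  tau : ℕ
  E : ℕ → Sym2 V → Prop
  time_mem : ∀ t e, E t e → 1 ≤ t ∧ t ≤ tau
  not_diag : ∀ t e, E t e → ¬ e.IsDiag

namespace TemporalGraph

variable {V : Type*}

/-- `G.IsPath s z m vs ts` : the sequence `(({vs (i-1), vs i}, ts i))_{i=1}^m` is a
temporal `s`-`z` path of length `m` in `G` (pairwise distinct vertices
`vs 0 = s, vs 1, …, vs m = z` and nondecreasing time stamps). -/
def IsPath (G : TemporalGraph V) (s z : V) (m : ℕ) (vs : ℕ → V) (ts : ℕ → ℕ) : Prop :=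
  vs 0 = s ∧ vs m = z ∧
  (∀ i j, i ≤ m → j ≤ m → i ≠ j → vs i ≠ vs j) ∧
  (∀ i, 1 ≤ i → i ≤ m → G.E (ts i) s(vs (i - 1), vs i)) ∧
  (∀ i, 1 ≤ i → i + 1 ≤ m → ts i ≤ ts (i + 1))

/-- `δ`-restless temporal path: consecutive time-edges are at most `δ` time steps apart. -/
def IsRestlessPath (G : TemporalGraph V) (δ : ℕ) (s z : V) (m : ℕ) (vs : ℕ → V)
    (ts : ℕ → ℕ) : Prop :=
  G.IsPath s z m vs ts ∧ ∀ i, 1 ≤ i → i + 1 ≤ m → ts (i + 1) ≤ ts i + δ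

/-- temporal `s`-`z` walk (vertices may repeat). -/
def IsWalk (G : TemporalGraph V) (s z : V) (m : ℕ) (vs : ℕ → V) (ts : ℕ → ℕ) : Prop :=
  vs 0 = s ∧ vs m = z ∧
  (∀ i, 1 ≤ i → i ≤ m → G.E (ts i) s(vs (i - 1), vs i)) ∧
  (∀ i, 1 ≤ i → i + 1 ≤ m → ts i ≤ ts (i + 1))

/-- `δ`-restless temporal walk. -/
def IsRestlessWalk (G : TemporalGraph V) (δ : ℕ) (s z : V) (m : ℕ) (vs : ℕ → V)
    (ts : ℕ → ℕ) : Prop :=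
  G.IsWalk s z m vs ts ∧ ∀ i, 1 ≤ i → i + 1 ≤ m → ts (i + 1) ≤ ts i + δ

/-- `G.dist z v t` : the minimum length of a temporal `v`-`z` path in `G` whose
departure time is at least `t`; `⊤` if no such path exists, and `0` for `v = z`. -/
def dist (G : TemporalGraph V) (z v : V) (t : ℕ) : ℕ∞ :=
  if v = z then 0
  else sInf {x : ℕ∞ | ∃ (m : ℕ) (vs : ℕ → V) (ts : ℕ → ℕ),
    G.IsPath v z m vs ts ∧ t ≤ ts 1 ∧ x = (m : ℕ∞)}

/-- The set `A_{a,t}^{b,t'}` of vertex appearances. -/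
def AreaAB (G : TemporalGraph V) (z a : V) (t : ℕ) (b : V) (t' : ℕ) : Set (V × ℕ) :=
  {w | G.dist z b t' < G.dist z w.1 w.2 ∧ G.dist z w.1 w.2 < G.dist z a t ∧
       t ≤ w.2 ∧ w.2 ≤ t'}

/-- The set `A^{b,t'}` of vertex appearances. -/
def AreaB (G : TemporalGraph V) (z b : V) (t' : ℕ) : Set (V × ℕ) :=
  {w | G.dist z b t' < G.dist z w.1 w.2 ∧ G.dist z w.1 w.2 < ⊤ ∧ w.2 ≤ t'}

/-- The temporal graph `G_{a,t}^{b,t'}`. -/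
def SubAB (G : TemporalGraph V) (z : V) (δ : ℕ) (a : V) (t : ℕ) (b : V) (t' : ℕ) :
    TemporalGraph V where
  tau := G.tau
  E := fun u e =>
    (G.E u e ∧ ∃ x y, e = s(x, y) ∧ (x, u) ∈ G.AreaAB z a t b t' ∧
        (y, u) ∈ G.AreaAB z a t b t') ∨
    (G.E u e ∧ u = t ∧ ∃ x, e = s(a, x) ∧ (x, t) ∈ G.AreaAB z a t b t') ∨
    (G.E u e ∧ t' ≤ u + δ ∧ ∃ x, e = s(x, b) ∧
        ((x, u) ∈ G.AreaAB z a t b t' ∨ (x = a ∧ u = t)))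
  time_mem := by rintro u e (⟨h, -⟩ | ⟨h, -⟩ | ⟨h, -⟩) <;> exact G.time_mem u e h
  not_diag := by rintro u e (⟨h, -⟩ | ⟨h, -⟩ | ⟨h, -⟩) <;> exact G.not_diag u e h

/-- The temporal graph `G^{b,t'}`. -/
def SubB (G : TemporalGraph V) (z : V) (δ : ℕ) (b : V) (t' : ℕ) : TemporalGraph V where
  tau := G.tau
  E := fun u e =>
    (G.E u e ∧ ∃ x y, e = s(x, y) ∧ (x, u) ∈ G.AreaB z b t' ∧ (y, u) ∈ G.AreaB z b t') ∨
    (G.E u e ∧ t' ≤ u + δ ∧ ∃ x, e = s(x, b) ∧ (x, u) ∈ G.AreaB z b t')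
  time_mem := by rintro u e (⟨h, -⟩ | ⟨h, -⟩) <;> exact G.time_mem u e h
  not_diag := by rintro u e (⟨h, -⟩ | ⟨h, -⟩) <;> exact G.not_diag u e h

/-- The vertex set of a temporal graph: all endpoints of its time-edges. -/
def vertexSet (G : TemporalGraph V) : Set V := {x | ∃ u e, G.E u e ∧ x ∈ e}

/-- Minimum length of a `δ`-restless temporal `a`-`b` path in `G` (`⊤` if none). -/
def restlessDist (G : TemporalGraph V) (δ : ℕ) (a b : V) : ℕ∞ :=
  sInf {x : ℕ∞ | ∃ m vs ts, G.IsRestlessPath δ a b m vs ts ∧ x = (m : ℕ∞)}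

/-- The base case of the table `T`: the value `T[u,t']` when `d(s,1) - d(u,t') ≤ ℓ`. -/
def tableBase (G : TemporalGraph V) (s z : V) (δ ℓ : ℕ) (u : V) (t' : ℕ) : ℕ∞ :=
  if u = s then 0
  else if 1 ≤ restlessDist (G.SubB z δ u t') δ s u ∧
          restlessDist (G.SubB z δ u t') δ s u ≤ (2 * ℓ : ℕ)
    then restlessDist (G.SubB z δ u t') δ s u
    else ⊤

/-- Fuelled version of the recursively defined table `T` (the fuel is an upper
bound on the recursion depth, which strictly decreases along the recursion of
the table via `d(s,1) - d(·,·)`). -/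
def tableFuel (G : TemporalGraph V) (s z : V) (δ ℓ : ℕ) : ℕ → V → ℕ → ℕ∞
  | 0, u, t' => tableBase G s z δ ℓ u t'
  | n + 1, u, t' =>
    if G.dist z s 1 - G.dist z u t' ≤ (ℓ : ℕ∞) then tableBase G s z δ ℓ u t'
    else sInf (insert ⊤ {x : ℕ∞ | ∃ (v : V) (t ℓ' : ℕ),
      1 ≤ t ∧ t ≤ t' ∧ (∃ e, G.E t e ∧ v ∈ e) ∧
      G.dist z u t' < G.dist z v t ∧ G.dist z v t ≤ G.dist z u t' + (ℓ : ℕ∞) + 1 ∧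
      1 ≤ ℓ' ∧ ℓ' ≤ 2 * ℓ + 1 ∧
      restlessDist (G.SubAB z δ v t u t') δ v u = (ℓ' : ℕ∞) ∧
      x = tableFuel G s z δ ℓ n v t + (ℓ' : ℕ∞)})

/-- The table `T` of the dynamic program, for the instance `(G,s,z,δ,k)`
(with `ℓ := k - d(s,1)`). -/
def table (G : TemporalGraph V) (s z : V) (δ k : ℕ) (u : V) (t' : ℕ) : ℕ∞ :=
  tableFuel G s z δ (k - (G.dist z s 1).toNat) ((G.dist z s 1).toNat + 1) u t'

/-- `vs i` is a distance separator of the temporal `s`-`z` path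
`(({vs (i-1), vs i}, ts i))_{i=1}^k` (with the convention `ts (k+1) = ts k`). -/
def IsDistSep (G : TemporalGraph V) (z : V) (k : ℕ) (vs : ℕ → V) (ts : ℕ → ℕ)
    (i : ℕ) : Prop :=
  (∀ j, j < i → G.dist z (vs i) (ts (i + 1)) < G.dist z (vs j) (ts (j + 1))) ∧
  (∀ j, i < j → j ≤ k → G.dist z (vs j) (ts (j + 1)) < G.dist z (vs i) (ts (i + 1)))

/-- The underlying (static) graph of a temporal graph. -/
def underlying (G : TemporalGraph V) : SimpleGraph V where
  Adj x y := ∃ t, G.E t s(x, y)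
  symm := by
    constructor
    rintro x y ⟨t, h⟩
    exact ⟨t, by rwa [Sym2.eq_swap]⟩
  loopless := by
    constructor
    rintro x ⟨t, h⟩
    exact G.not_diag t _ h (by simp)

/-- The set of non-isolated vertex appearances of `G`. -/
def NonIsolated (G : TemporalGraph V) : Set (V × ℕ) := {p | ∃ e, G.E p.2 e ∧ p.1 ∈ e}

/-- The weighted arcs of the auxiliary directed graph `D` (for destination `z`):
`DArc G z x y w` means there is an arc from `x` to `y` of weight `w`.
`Sum.inl ()` is the special vertex `z` of `D`; `Sum.inr (v, t)` is the vertex `v_t`. -/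
def DArc (G : TemporalGraph V) (z : V) : Unit ⊕ V × ℕ → Unit ⊕ V × ℕ → ℕ → Prop
  | Sum.inr (v, ta), Sum.inr (u, tb), w =>
      (w = 1 ∧ ta = tb ∧ v ≠ u ∧ G.E ta s(v, u)) ∨
      (w = 0 ∧ v = u ∧ (v, ta) ∈ G.NonIsolated ∧ (v, tb) ∈ G.NonIsolated ∧ tb < ta ∧
        ∀ t'', tb < t'' → t'' < ta → (v, t'') ∉ G.NonIsolated)
  | Sum.inl _, Sum.inr (u, tb), w =>
      w = 0 ∧ u = z ∧ (z, tb) ∈ G.NonIsolated ∧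
        ∀ t'', (z, t'') ∈ G.NonIsolated → t'' ≤ tb
  | _, _, _ => False

/-- The minimum total arc weight of a directed path in `D` from the special
vertex `z` to the vertex `v_t` (`⊤` if `v_t` is not reachable from `z`). -/
def dMinWeight (G : TemporalGraph V) (z v : V) (t : ℕ) : ℕ∞ :=
  sInf {x : ℕ∞ | ∃ (n : ℕ) (w : ℕ → Unit ⊕ V × ℕ) (wt : ℕ → ℕ),
    w 0 = Sum.inl () ∧ w n = Sum.inr (v, t) ∧
    (∀ i j, i ≤ n → j ≤ n → i ≠ j → w i ≠ w j) ∧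
    (∀ i, i < n → DArc G z (w i) (w (i + 1)) (wt i)) ∧
    x = ∑ i ∈ Finset.range n, (wt i : ℕ∞)}

end TemporalGraph

open TemporalGraph

lemma ts_mono_aux {m : ℕ} {ts : ℕ → ℕ}
    (h : ∀ i, 1 ≤ i → i + 1 ≤ m → ts i ≤ ts (i + 1)) :
    ∀ a b, 1 ≤ a → a ≤ b → b ≤ m → ts a ≤ ts b := by
  intro a b ha hab hbm
  induction b with
  | zero => omega
  | succ n ih =>
    rcases Nat.lt_or_ge a (n + 1) with hlt | hge
    · exact le_trans (ih (by omega) (by omega)) (h n (by omega) (by omega))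
    · have : a = n + 1 := by omega
      subst this; exact le_refl _

lemma walk_to_path {V : Type*} (G : TemporalGraph V) (s z : V) :
    ∀ m vs ts, G.IsWalk s z m vs ts → s ≠ z →
    ∃ m' vs' ts', m' ≤ m ∧ G.IsPath s z m' vs' ts' ∧ ts 1 ≤ ts' 1 := by
  intro m
  induction m using Nat.strong_induction_on with
  | _ m ih =>
    intro vs ts hw hsz
    obtain ⟨h0, hm, hE, hmono⟩ := hw
    have hmono' := ts_mono_aux hmono
    by_cases hdist : ∀ i j, i ≤ m → j ≤ m → i ≠ j → vs i ≠ vs j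
    · exact ⟨m, vs, ts, le_refl _, ⟨h0, hm, hdist, hE, hmono⟩, le_refl _⟩
    · push_neg at hdist
      obtain ⟨i, j, him, hjm, hne, heq⟩ := hdist
      have key : ∀ i j, i < j → j ≤ m → vs i = vs j →
          ∃ m' vs' ts', m' ≤ m ∧ G.IsPath s z m' vs' ts' ∧ ts 1 ≤ ts' 1 := by
        clear him hjm hne heq
        intro i j hij hjm heq
        -- the case i = 0 ∧ j = m would force s = z
        have hnotboth : ¬ (i = 0 ∧ j = m) := by
          rintro ⟨rfl, rfl⟩
          exact hsz (h0 ▸ hm ▸ heq)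
        set m' := m - (j - i) with hm'def
        set vs' : ℕ → V := fun k => if k ≤ i then vs k else vs (k + (j - i)) with hvs'
        set ts' : ℕ → ℕ := fun k => if k ≤ i then ts k else ts (k + (j - i)) with hts'
        have hm'lt : m' < m := by omega
        have hw' : G.IsWalk s z m' vs' ts' := by
          refine ⟨?_, ?_, ?_, ?_⟩
          · simp only [hvs']
            rw [if_pos (Nat.zero_le i)]; exact h0
          · simp only [hvs']
            by_cases h : m' ≤ i
            · have : m' = i := by omega
              have : j = m := by omega
              rw [if_pos h]
              have hmi : m' = i := by omega
              rw [hmi, heq, this]; exact hm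
            · rw [if_neg h]
              have : m' + (j - i) = m := by omega
              rw [this]; exact hm
          · intro k hk1 hkm'
            by_cases hk : k ≤ i
            · have hk1i : k - 1 ≤ i := by omega
              simp only [hvs', hts', if_pos hk, if_pos hk1i]
              exact hE k hk1 (by omega)
            · have e1 : vs' (k - 1) = vs (k + (j - i) - 1) := by
                simp only [hvs']
                by_cases hk1i : k - 1 ≤ i
                · have hki : k = i + 1 := by omega
                  rw [if_pos hk1i]
                  have : k - 1 = i := by omega
                  rw [this, heq]
                  congr 1; omega
                · rw [if_neg hk1i]; congr 1; omega
              have e2 : vs' k = vs (k + (j - i)) := by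
                simp only [hvs']; rw [if_neg hk]
              have e3 : ts' k = ts (k + (j - i)) := by
                simp only [hts']; rw [if_neg hk]
              rw [e1, e2, e3]
              exact hE (k + (j - i)) (by omega) (by omega)
          · intro k hk1 hk1m'
            by_cases hk1i : k + 1 ≤ i
            · simp only [hts', if_pos hk1i, if_pos (by omega : k ≤ i)]
              exact hmono k hk1 (by omega)
            · by_cases hki : k ≤ i
              · have : k = i := by omega
                subst this
                simp only [hts', if_pos hki, if_neg hk1i]
                exact hmono' k (k + 1 + (j - k)) hk1 (by omega) (by omega)
              · simp only [hts', if_neg hki, if_neg (by omega : ¬ k + 1 ≤ i)]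
                have : k + 1 + (j - i) = (k + (j - i)) + 1 := by omega
                rw [this]
                exact hmono (k + (j - i)) (by omega) (by omega)
        have hts1 : ts 1 ≤ ts' 1 := by
          by_cases h1i : 1 ≤ i
          · simp only [hts', if_pos h1i]
            exact le_refl _
          · have hi0 : i = 0 := by omega
            have hjlt : j < m := by omega
            simp only [hts', if_neg h1i]
            exact hmono' 1 (1 + (j - i)) (le_refl _) (by omega) (by omega)
        obtain ⟨m'', vs'', ts'', hle, hp, hts⟩ := ih m' hm'lt vs' ts' hw' hsz
        exact ⟨m'', vs'', ts'', by omega, hp, le_trans hts1 hts⟩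
      rcases lt_or_gt_of_ne hne with h | h
      · exact key i j h hjm heq
      · exact key j i h him heq.symm

lemma dist_le_walk {V : Type*} (G : TemporalGraph V) (z s : V) (t m : ℕ)
    (vs : ℕ → V) (ts : ℕ → ℕ) (hw : G.IsWalk s z m vs ts) (ht : t ≤ ts 1) :
    G.dist z s t ≤ (m : ℕ∞) := by
  by_cases hsz : s = z
  · simp [TemporalGraph.dist, hsz]
  · obtain ⟨m', vs', ts', hm', hp, hts⟩ := walk_to_path G s z m vs ts hw hsz
    rw [TemporalGraph.dist, if_neg hsz]
    exact le_trans (sInf_le ⟨m', vs', ts', hp, le_trans ht hts, rfl⟩)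
      (by exact_mod_cast hm')

/-- Along a shortest temporal `s`-`z` path among those
departing at a time at least `t` (i.e. a temporal `s`-`z` path of length
`m = d(s,t)` with departure time `≥ t`), with the convention `t_{m+1} := t_m`,
one has `d(v_i, t_{i+1}) = m - i` for every `i ∈ [0,m]`. -/
theorem statement18 {V : Type*} (G : TemporalGraph V) (z s : V) (t : ℕ) (m : ℕ)
    (vs : ℕ → V) (ts : ℕ → ℕ)
    (hP : G.IsPath s z m vs ts) (hdep : t ≤ ts 1)
    (hshortest : G.dist z s t = (m : ℕ∞))
    (hconv : ts (m + 1) = ts m) :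
    ∀ i ≤ m, G.dist z (vs i) (ts (i + 1)) = ((m - i : ℕ) : ℕ∞) := by
  intro i him
  obtain ⟨h0, hm, hdist, hE, hmono⟩ := hP
  rcases eq_or_lt_of_le him with rfl | hlt
  · rw [hm]
    simp [TemporalGraph.dist]
  · have hvz : vs i ≠ z := fun h => hdist i m (by omega) (le_refl m) (by omega) (h.trans hm.symm)
    -- upper bound via the suffix path
    have hub : G.dist z (vs i) (ts (i + 1)) ≤ ((m - i : ℕ) : ℕ∞) := by
      rw [TemporalGraph.dist, if_neg hvz]
      refine sInf_le ⟨m - i, fun k => vs (i + k), fun k => ts (i + k), ?_, ?_, rfl⟩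
      · refine ⟨by simp, ?_, ?_, ?_, ?_⟩
        · show vs (i + (m - i)) = z
          have : i + (m - i) = m := by omega
          rw [this]; exact hm
        · intro a b ham hbm hab
          exact hdist (i + a) (i + b) (by omega) (by omega) (by omega)
        · intro k hk1 hkm
          show G.E (ts (i + k)) s(vs (i + (k - 1)), vs (i + k))
          have e1 : i + (k - 1) = i + k - 1 := by omega
          rw [e1]
          exact hE (i + k) (by omega) (by omega)
        · intro k hk1 hkm
          show ts (i + k) ≤ ts (i + (k + 1))
          have : i + (k + 1) = (i + k) + 1 := by omega
          rw [this]
          exact hmono (i + k) (by omega) (by omega)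
      · exact le_refl _
    refine le_antisymm hub (le_of_not_gt fun hcon => ?_)
    rw [TemporalGraph.dist, if_neg hvz] at hcon
    obtain ⟨x, hxmem, hxlt⟩ := sInf_lt_iff.mp hcon
    obtain ⟨q, vs'', ts'', hQ, hQdep, rfl⟩ := hxmem
    have hqlt : q < m - i := by exact_mod_cast hxlt
    obtain ⟨hq0, hqm, hqdist, hqE, hqmono⟩ := hQ
    have hq1 : 1 ≤ q := by
      rcases Nat.eq_zero_or_pos q with rfl | h
      · exact absurd (hq0.symm.trans hqm) hvz
      · exact h
    -- build a walk of length i + q < m from s to z departing at time ≥ t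
    set w : ℕ → V := fun k => if k ≤ i then vs k else vs'' (k - i) with hw
    set tw : ℕ → ℕ := fun k => if k ≤ i then ts k else ts'' (k - i) with htw
    have hwalk : G.IsWalk s z (i + q) w tw := by
      refine ⟨?_, ?_, ?_, ?_⟩
      · simp only [hw]
        rw [if_pos (Nat.zero_le i)]; exact h0
      · simp only [hw]
        rw [if_neg (by omega : ¬ i + q ≤ i)]
        have : i + q - i = q := by omega
        rw [this]; exact hqm
      · intro k hk1 hkm
        by_cases hki : k ≤ i
        · simp only [hw, htw, if_pos hki, if_pos (by omega : k - 1 ≤ i)]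
          exact hE k hk1 (by omega)
        · have e1 : w (k - 1) = vs'' (k - i - 1) := by
            simp only [hw]
            by_cases h1 : k - 1 ≤ i
            · have : k = i + 1 := by omega
              rw [if_pos h1]
              have e2 : k - 1 = i := by omega
              have e3 : k - i - 1 = 0 := by omega
              rw [e2, e3, hq0]
            · rw [if_neg h1]; congr 1; omega
          have e2 : w k = vs'' (k - i) := by simp only [hw]; rw [if_neg hki]
          have e3 : tw k = ts'' (k - i) := by simp only [htw]; rw [if_neg hki]
          rw [e1, e2, e3]
          exact hqE (k - i) (by omega) (by omega)
      · intro k hk1 hkm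
        by_cases hk1i : k + 1 ≤ i
        · simp only [htw, if_pos hk1i, if_pos (by omega : k ≤ i)]
          exact hmono k hk1 (by omega)
        · by_cases hki : k ≤ i
          · have hkeq : k = i := by omega
            simp only [htw, if_pos hki, if_neg hk1i]
            have e1 : k + 1 - i = 1 := by omega
            rw [e1]
            calc ts k ≤ ts (i + 1) := by
                  rcases eq_or_lt_of_le (hkeq ▸ le_refl i) with h | h
                  · rw [hkeq]; exact hmono i (by omega) (by omega)
                  · omega
              _ ≤ ts'' 1 := hQdep
          · simp only [htw, if_neg hki, if_neg (by omega : ¬ k + 1 ≤ i)]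
            have : k + 1 - i = (k - i) + 1 := by omega
            rw [this]
            exact hqmono (k - i) (by omega) (by omega)
    have hdep' : t ≤ tw 1 := by
      by_cases h1i : 1 ≤ i
      · simp only [htw, if_pos h1i]; exact hdep
      · have hi0 : i = 0 := by omega
        simp only [htw, if_neg h1i]
        have : (1 : ℕ) - i = 1 := by omega
        rw [this]
        calc t ≤ ts 1 := hdep
          _ = ts (i + 1) := by rw [hi0]
          _ ≤ ts'' 1 := hQdep
    have := dist_le_walk G z s t (i + q) w tw hwalk hdep'
    rw [hshortest] at this
    have : m ≤ i + q := by exact_mod_cast this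
    omega
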